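/- Let n ≥ 3 and suppose π̂_i = π_i for every i ∈ {1,…,n}. Then the family (Π_g)_g has the permutation property: Π_g(x_1,…,x_n) = Π_e(x_1,…,x_n) for every permutation g of {1,…,n} and all x ∈ X_1×⋯×X_n. -/

import Mathlib

open Finset

/-- `μ̃_i`, the mean of the pmf `pt i` on `X i`. -/
noncomputable def muN (X : ℕ → Finset ℝ) (pt : ℕ → ℝ → ℝ) (i : ℕ) : ℝ :=
  ∑ x ∈ X i, pt i x * x

/-- `σ̃²_i`, the variance of the pmf `pt i` on `X i`. -/
noncomputable def sig2N (X : ℕ → Finset ℝ) (pt : ℕ → ℝ → ℝ) (i : ℕ) : ℝ :=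
  ∑ x ∈ X i, pt i x * (x - muN X pt i) ^ 2

/-- `ζ_i(x) = π̃_i(x)(x − μ̃_i)/σ̃²_i`. -/
noncomputable def zetaN (X : ℕ → Finset ℝ) (pt : ℕ → ℝ → ℝ) (i : ℕ) (x : ℝ) : ℝ :=
  pt i x * (x - muN X pt i) / sig2N X pt i

/-- The KNW closed-form function for the index sequence `σ(1), …, σ(m)`:
`Π(x) = ∏_{i=1}^m π_{σ(i)}(x_{σ(i)})
  + ∑_{i=2}^m [ ζ_{σ(i)}(x_{σ(i)}) ∑_{j=1}^{i−1} (∏_{k≤i−1, k≠j} π̂_{σ(k)}(x_{σ(k)}))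
      β_{σ(i)σ(j)} ζ_{σ(j)}(x_{σ(j)}) ] ∏_{k=i+1}^m π_{σ(k)}(x_{σ(k)})`. -/
noncomputable def knwClosedF (X : ℕ → Finset ℝ) (π πh pt : ℕ → ℝ → ℝ) (β : ℕ → ℕ → ℝ)
    (m : ℕ) (σ : ℕ → ℕ) (x : ℕ → ℝ) : ℝ :=
  (∏ i ∈ Finset.Icc 1 m, π (σ i) (x (σ i))) +
    ∑ i ∈ Finset.Icc 2 m,
      (zetaN X pt (σ i) (x (σ i)) *
          ∑ j ∈ Finset.Icc 1 (i - 1),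
            (∏ k ∈ (Finset.Icc 1 (i - 1)).erase j, πh (σ k) (x (σ k))) *
              β (σ i) (σ j) * zetaN X pt (σ j) (x (σ j))) *
        ∏ k ∈ Finset.Icc (i + 1) m, π (σ k) (x (σ k))


lemma pairSumPerm (n : ℕ) (T : ℕ → ℕ → ℝ)
    (hs : ∀ a ∈ Finset.Icc 1 n, ∀ b ∈ Finset.Icc 1 n, T a b = T b a)
    (g : ℕ → ℕ) (hg : Set.BijOn g (Set.Icc 1 n) (Set.Icc 1 n)) :
    ∑ p ∈ Finset.Icc 1 n ×ˢ Finset.Icc 1 n, (if p.2 < p.1 then T (g p.1) (g p.2) else 0)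
      = ∑ p ∈ Finset.Icc 1 n ×ˢ Finset.Icc 1 n, (if p.2 < p.1 then T p.1 p.2 else 0) := by
  have hmem : ∀ k : ℕ, k ∈ Finset.Icc 1 n ↔ k ∈ Set.Icc 1 n := by
    intro k; simp [Finset.mem_Icc, Set.mem_Icc]
  have hgmem : ∀ k ∈ Finset.Icc 1 n, g k ∈ Finset.Icc 1 n := fun k hk =>
    (hmem _).2 (hg.mapsTo ((hmem k).1 hk))
  have hginj : ∀ a ∈ Finset.Icc 1 n, ∀ b ∈ Finset.Icc 1 n, g a = g b → a = b :=
    fun a ha b hb h => hg.injOn ((hmem a).1 ha) ((hmem b).1 hb) h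
  have hgsurj : ∀ b ∈ Finset.Icc 1 n, ∃ a ∈ Finset.Icc 1 n, g a = b := by
    intro b hb
    obtain ⟨a, ha, hab⟩ := hg.surjOn ((hmem b).1 hb)
    exact ⟨a, (hmem a).2 ha, hab⟩
  have hswap : ∀ F : ℕ → ℕ → ℝ, (∀ a ∈ Finset.Icc 1 n, ∀ b ∈ Finset.Icc 1 n, F a b = F b a) →
      (∑ p ∈ Finset.Icc 1 n ×ˢ Finset.Icc 1 n, if p.2 < p.1 then F p.1 p.2 else 0)
        = ∑ p ∈ Finset.Icc 1 n ×ˢ Finset.Icc 1 n, (if p.1 < p.2 then F p.1 p.2 else 0) := by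
    intro F hF
    refine Finset.sum_nbij' (i := Prod.swap) (j := Prod.swap) ?_ ?_ ?_ ?_ ?_
    · intro p hp; rw [Finset.mem_product] at hp ⊢; exact ⟨hp.2, hp.1⟩
    · intro p hp; rw [Finset.mem_product] at hp ⊢; exact ⟨hp.2, hp.1⟩
    · intro p _; simp
    · intro p _; simp
    · intro p hp
      rw [Finset.mem_product] at hp
      simp only [Prod.fst_swap, Prod.snd_swap]
      by_cases h : p.2 < p.1
      · simp [h, hF _ hp.1 _ hp.2]
      · simp [h]
  have hdouble : ∀ F : ℕ → ℕ → ℝ,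
      (∑ p ∈ Finset.Icc 1 n ×ˢ Finset.Icc 1 n, if p.2 < p.1 then F p.1 p.2 else 0)
        + (∑ p ∈ Finset.Icc 1 n ×ˢ Finset.Icc 1 n, if p.1 < p.2 then F p.1 p.2 else 0)
        = ∑ p ∈ Finset.Icc 1 n ×ˢ Finset.Icc 1 n, (if p.1 ≠ p.2 then F p.1 p.2 else 0) := by
    intro F
    rw [← Finset.sum_add_distrib]
    refine Finset.sum_congr rfl fun p _ => ?_
    rcases lt_trichotomy p.1 p.2 with h | h | h
    · simp [h, not_lt_of_gt h, h.ne]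
    · simp [h]
    · simp [h, not_lt_of_gt h, h.ne']
  have hreidx : (∑ p ∈ Finset.Icc 1 n ×ˢ Finset.Icc 1 n, if p.1 ≠ p.2 then T (g p.1) (g p.2) else 0)
      = ∑ p ∈ Finset.Icc 1 n ×ˢ Finset.Icc 1 n, (if p.1 ≠ p.2 then T p.1 p.2 else 0) := by
    refine Finset.sum_bij (fun p _ => (g p.1, g p.2)) ?_ ?_ ?_ ?_
    · intro p hp; rw [Finset.mem_product] at hp ⊢; exact ⟨hgmem _ hp.1, hgmem _ hp.2⟩
    · intro p hp q hq h
      rw [Finset.mem_product] at hp hq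
      rw [Prod.mk.injEq] at h
      exact Prod.ext (hginj _ hp.1 _ hq.1 h.1) (hginj _ hp.2 _ hq.2 h.2)
    · intro p hp
      rw [Finset.mem_product] at hp
      obtain ⟨a, ha, hae⟩ := hgsurj _ hp.1
      obtain ⟨b, hb, hbe⟩ := hgsurj _ hp.2
      exact ⟨(a, b), Finset.mem_product.2 ⟨ha, hb⟩, by simp [hae, hbe]⟩
    · intro p hp
      rw [Finset.mem_product] at hp
      by_cases h : p.1 = p.2
      · simp [h]
      · have hne : g p.1 ≠ g p.2 := fun hc => h (hginj _ hp.1 _ hp.2 hc)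
        simp [h, hne]
  have h1 := hswap (fun a b => T (g a) (g b))
    (fun a ha b hb => hs _ (hgmem a ha) _ (hgmem b hb))
  have h2 := hswap T hs
  have d1 := hdouble fun a b => T (g a) (g b)
  have d2 := hdouble T
  linarith [hreidx]

lemma prodSplitAux (f : ℕ → ℝ) {n i j : ℕ} (h2 : 2 ≤ i) (hin : i ≤ n)
    (hj1 : 1 ≤ j) (hji : j ≤ i - 1) :
    (f j * ∏ k ∈ (Finset.Icc 1 (i - 1)).erase j, f k) *
      (f i * ∏ k ∈ Finset.Icc (i + 1) n, f k) = ∏ k ∈ Finset.Icc 1 n, f k := by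
  have e1 : f j * ∏ k ∈ (Finset.Icc 1 (i - 1)).erase j, f k
      = ∏ k ∈ Finset.Icc 1 (i - 1), f k :=
    Finset.mul_prod_erase _ _ (by simp only [Finset.mem_Icc]; omega)
  have hIcc : Finset.Icc (i + 1) n = (Finset.Icc i n).erase i := by
    ext k; simp only [Finset.mem_Icc, Finset.mem_erase]; omega
  have e2 : f i * ∏ k ∈ Finset.Icc (i + 1) n, f k = ∏ k ∈ Finset.Icc i n, f k := by
    rw [hIcc]
    exact Finset.mul_prod_erase _ _ (by simp only [Finset.mem_Icc]; omega)
  rw [e1, e2]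
  have h1 : Finset.Icc 1 (i - 1) = Finset.Ioc 0 (i - 1) := by
    ext k; simp only [Finset.mem_Icc, Finset.mem_Ioc]; omega
  have h2' : Finset.Icc i n = Finset.Ioc (i - 1) n := by
    ext k; simp only [Finset.mem_Icc, Finset.mem_Ioc]; omega
  have h3 : Finset.Icc 1 n = Finset.Ioc 0 n := by
    ext k; simp only [Finset.mem_Icc, Finset.mem_Ioc]; omega
  rw [h1, h2', h3]
  exact Finset.prod_Ioc_consecutive _ (by omega) (by omega)

lemma knwNormal (n : ℕ) (X : ℕ → Finset ℝ) (π πh pt : ℕ → ℝ → ℝ) (β : ℕ → ℕ → ℝ)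
    (x : ℕ → ℝ)
    (hπ0 : ∀ i ∈ Finset.Icc 1 n, π i (x i) ≠ 0)
    (hph : ∀ i ∈ Finset.Icc 1 n, πh i (x i) = π i (x i))
    (f : ℕ → ℕ) (hf : Set.BijOn f (Set.Icc 1 n) (Set.Icc 1 n)) :
    knwClosedF X π πh pt β n f x
      = (∏ c ∈ Finset.Icc 1 n, π c (x c))
        + ∑ p ∈ Finset.Icc 1 n ×ˢ Finset.Icc 1 n,
            (if p.2 < p.1 then
              zetaN X pt (f p.1) (x (f p.1)) * β (f p.1) (f p.2) *
                zetaN X pt (f p.2) (x (f p.2)) *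
                ((∏ c ∈ Finset.Icc 1 n, π c (x c)) /
                  (π (f p.1) (x (f p.1)) * π (f p.2) (x (f p.2))))
             else 0) := by
  have hmem : ∀ k : ℕ, k ∈ Finset.Icc 1 n ↔ k ∈ Set.Icc 1 n := by
    intro k; simp [Finset.mem_Icc, Set.mem_Icc]
  have hfmem : ∀ k ∈ Finset.Icc 1 n, f k ∈ Finset.Icc 1 n := fun k hk =>
    (hmem _).2 (hf.mapsTo ((hmem k).1 hk))
  have hfinj : ∀ a ∈ Finset.Icc 1 n, ∀ b ∈ Finset.Icc 1 n, f a = f b → a = b :=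
    fun a ha b hb h => hf.injOn ((hmem a).1 ha) ((hmem b).1 hb) h
  have himg : (Finset.Icc 1 n).image f = Finset.Icc 1 n := by
    apply Finset.eq_of_subset_of_card_le
    · intro c hc
      obtain ⟨k, hk, rfl⟩ := Finset.mem_image.1 hc
      exact hfmem k hk
    · rw [Finset.card_image_of_injOn (fun a ha b hb h => hfinj a ha b hb h)]
  have hprod : ∀ F : ℕ → ℝ, (∏ k ∈ Finset.Icc 1 n, F (f k)) = ∏ c ∈ Finset.Icc 1 n, F c := by
    intro F
    exact (Finset.prod_image (fun a ha b hb h => hfinj a ha b hb h)).symm.trans (by rw [himg])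
  have hprodπ : (∏ k ∈ Finset.Icc 1 n, π (f k) (x (f k))) = ∏ c ∈ Finset.Icc 1 n, π c (x c) :=
    hprod fun c => π c (x c)
  unfold knwClosedF
  rw [hprodπ]
  congr 1
  calc
    ∑ i ∈ Finset.Icc 2 n,
        (zetaN X pt (f i) (x (f i)) *
            ∑ j ∈ Finset.Icc 1 (i - 1),
              (∏ k ∈ (Finset.Icc 1 (i - 1)).erase j, πh (f k) (x (f k))) *
                β (f i) (f j) * zetaN X pt (f j) (x (f j))) *
          ∏ k ∈ Finset.Icc (i + 1) n, π (f k) (x (f k))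
      = ∑ i ∈ Finset.Icc 2 n, ∑ j ∈ Finset.Icc 1 (i - 1),
          zetaN X pt (f i) (x (f i)) * β (f i) (f j) * zetaN X pt (f j) (x (f j)) *
            ((∏ c ∈ Finset.Icc 1 n, π c (x c)) /
              (π (f i) (x (f i)) * π (f j) (x (f j)))) := by
        refine Finset.sum_congr rfl fun i hi => ?_
        rw [Finset.mul_sum, Finset.sum_mul]
        refine Finset.sum_congr rfl fun j hj => ?_
        rw [Finset.mem_Icc] at hi hj
        have hiA : i ∈ Finset.Icc 1 n := by rw [Finset.mem_Icc]; omega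
        have hjA : j ∈ Finset.Icc 1 n := by rw [Finset.mem_Icc]; omega
        have hπh : (∏ k ∈ (Finset.Icc 1 (i - 1)).erase j, πh (f k) (x (f k)))
            = ∏ k ∈ (Finset.Icc 1 (i - 1)).erase j, π (f k) (x (f k)) := by
          refine Finset.prod_congr rfl fun k hk => ?_
          rw [Finset.mem_erase, Finset.mem_Icc] at hk
          exact hph _ (hfmem k (by rw [Finset.mem_Icc]; omega))
        rw [hπh]
        have hsplit := prodSplitAux (fun k => π (f k) (x (f k))) hi.1 hi.2 hj.1 hj.2
        have hfi0 : π (f i) (x (f i)) ≠ 0 := hπ0 _ (hfmem i hiA)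
        have hfj0 : π (f j) (x (f j)) ≠ 0 := hπ0 _ (hfmem j hjA)
        have h2 : (∏ k ∈ (Finset.Icc 1 (i - 1)).erase j, π (f k) (x (f k))) *
            (∏ k ∈ Finset.Icc (i + 1) n, π (f k) (x (f k)))
            = (∏ c ∈ Finset.Icc 1 n, π c (x c)) /
              (π (f i) (x (f i)) * π (f j) (x (f j))) := by
          rw [eq_div_iff (mul_ne_zero hfi0 hfj0), ← hprodπ, ← hsplit]
          ring
        rw [← h2]
        ring
    _ = ∑ i ∈ Finset.Icc 1 n, ∑ j ∈ Finset.Icc 1 (i - 1),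
          zetaN X pt (f i) (x (f i)) * β (f i) (f j) * zetaN X pt (f j) (x (f j)) *
            ((∏ c ∈ Finset.Icc 1 n, π c (x c)) /
              (π (f i) (x (f i)) * π (f j) (x (f j)))) := by
        rw [show Finset.Icc 2 n = (Finset.Icc 1 n).erase 1 by
          ext k; simp only [Finset.mem_Icc, Finset.mem_erase]; omega]
        exact Finset.sum_erase _ (by simp)
    _ = ∑ i ∈ Finset.Icc 1 n, ∑ j ∈ Finset.Icc 1 n,
          (if j < i then
            zetaN X pt (f i) (x (f i)) * β (f i) (f j) * zetaN X pt (f j) (x (f j)) *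
              ((∏ c ∈ Finset.Icc 1 n, π c (x c)) /
                (π (f i) (x (f i)) * π (f j) (x (f j))))
           else 0) := by
        refine Finset.sum_congr rfl fun i hi => ?_
        rw [Finset.mem_Icc] at hi
        rw [show Finset.Icc 1 (i - 1) = (Finset.Icc 1 n).filter (fun j => j < i) by
          ext k; simp only [Finset.mem_Icc, Finset.mem_filter]; omega]
        exact Finset.sum_filter _ _
    _ = ∑ p ∈ Finset.Icc 1 n ×ˢ Finset.Icc 1 n,
          (if p.2 < p.1 then
            zetaN X pt (f p.1) (x (f p.1)) * β (f p.1) (f p.2) *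
              zetaN X pt (f p.2) (x (f p.2)) *
              ((∏ c ∈ Finset.Icc 1 n, π c (x c)) /
                (π (f p.1) (x (f p.1)) * π (f p.2) (x (f p.2))))
           else 0) := by
        rw [Finset.sum_product]

theorem stmt14 (n : ℕ) (hn : 3 ≤ n)
    (X : ℕ → Finset ℝ) (π πh pt : ℕ → ℝ → ℝ) (β : ℕ → ℕ → ℝ)
    (hXne : ∀ i ∈ Finset.Icc 1 n, (X i).Nonempty)
    (hπ_pos : ∀ i ∈ Finset.Icc 1 n, ∀ x ∈ X i, 0 < π i x)
    (hπ_sum : ∀ i ∈ Finset.Icc 1 n, ∑ x ∈ X i, π i x = 1)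
    (hpt_nn : ∀ i ∈ Finset.Icc 1 n, ∀ x ∈ X i, 0 ≤ pt i x)
    (hpt_sum : ∀ i ∈ Finset.Icc 1 n, ∑ x ∈ X i, pt i x = 1)
    (hpt_nd : ∀ i ∈ Finset.Icc 1 n, 1 < ((X i).filter fun x => pt i x ≠ 0).card)
    (hph_nn : ∀ i ∈ Finset.Icc 1 n, ∀ x ∈ X i, 0 ≤ πh i x)
    (hph_sum : ∀ i ∈ Finset.Icc 1 n, ∑ x ∈ X i, πh i x = 1)
    (hβ_symm : ∀ i ∈ Finset.Icc 1 n, ∀ j ∈ Finset.Icc 1 n, β i j = β j i)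
    -- assume `π̂_i = π_i` for every `i`
    (hph_eq : ∀ i ∈ Finset.Icc 1 n, ∀ x ∈ X i, πh i x = π i x) :
    -- then the family `(Π_g)_g` has the permutation property
    ∀ g : ℕ → ℕ, Set.BijOn g (Set.Icc 1 n) (Set.Icc 1 n) →
      ∀ x : ℕ → ℝ, (∀ i ∈ Finset.Icc 1 n, x i ∈ X i) →
        knwClosedF X π πh pt β n g x = knwClosedF X π πh pt β n id x := by
  intro g hg x hx
  have hπ0 : ∀ i ∈ Finset.Icc 1 n, π i (x i) ≠ 0 := fun i hi =>
    ne_of_gt (hπ_pos i hi _ (hx i hi))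
  have hph : ∀ i ∈ Finset.Icc 1 n, πh i (x i) = π i (x i) := fun i hi =>
    hph_eq i hi _ (hx i hi)
  have hid : Set.BijOn (id : ℕ → ℕ) (Set.Icc 1 n) (Set.Icc 1 n) :=
    Set.bijOn_id _
  rw [knwNormal n X π πh pt β x hπ0 hph g hg, knwNormal n X π πh pt β x hπ0 hph id hid]
  simp only [id_eq]
  congr 1
  exact pairSumPerm n
    (fun a b => zetaN X pt a (x a) * β a b * zetaN X pt b (x b) *
      ((∏ c ∈ Finset.Icc 1 n, π c (x c)) / (π a (x a) * π b (x b))))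
    (fun a ha b hb => by rw [hβ_symm a ha b hb]; ring) g hg
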